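/- In the setting of a general filtration {Q_n} on a compact doubling metric space, the correlation dimension of a finite Borel regular measure μ on E satisfies the upper bound dim_cor(μ) ≤ liminf_{n→∞} log(∑_{Q∈Q_n} μ(Q)²)/log δ_n, because ∫ μ(B(x, 2γ_n)) dμ(x) ≥ ∑_{Q∈Q_n} μ(Q)². -/

import Mathlib

open MeasureTheory Filter Metric Set Topology
open scoped ENNReal

/-- The lower local dimension of a measure at a point. -/
noncomputable def lowerLocalDim {X : Type*} [MetricSpace X] [MeasurableSpace X]
    (μ : Measure X) (x : X) : ℝ :=
  liminf (fun r : ℝ => Real.log (μ (closedBall x r)).toReal / Real.log r) (𝓝[>] 0)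

/-- The upper local dimension of a measure at a point. -/
noncomputable def upperLocalDim {X : Type*} [MetricSpace X] [MeasurableSpace X]
    (μ : Measure X) (x : X) : ℝ :=
  limsup (fun r : ℝ => Real.log (μ (closedBall x r)).toReal / Real.log r) (𝓝[>] 0)

/-- The `s`-potential of `μ` at `x`. -/
noncomputable def potential {X : Type*} [MetricSpace X] [MeasurableSpace X]
    (μ : Measure X) (s : ℝ) (x : X) : ℝ≥0∞ :=
  ∫⁻ y, edist x y ^ (-s) ∂μ

/-- The `s`-energy of `μ`. -/
noncomputable def energy {X : Type*} [MetricSpace X] [MeasurableSpace X]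
    (μ : Measure X) (s : ℝ) : ℝ≥0∞ :=
  ∫⁻ x, ∫⁻ y, edist x y ^ (-s) ∂μ ∂μ

/-- The correlation dimension of `μ`: `sup { s : I_s(μ) < ∞ }`. -/
noncomputable def corrDim {X : Type*} [MetricSpace X] [MeasurableSpace X]
    (μ : Measure X) : ℝ :=
  sSup {s : ℝ | energy μ s < ⊤}

/-- The lower Hausdorff dimension of `μ`: the `μ`-essential infimum of the
lower local dimension. -/
noncomputable def lowerHausdorffDim {X : Type*} [MetricSpace X] [MeasurableSpace X]
    (μ : Measure X) : ℝ :=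
  essInf (fun x => lowerLocalDim μ x) μ

lemma cover_iter {X : Type*} [MetricSpace X] (N : ℕ)
    (hN : ∀ (x : X) (r : ℝ), ∃ t : Finset X, t.card ≤ N ∧
      closedBall x r ⊆ ⋃ y ∈ t, closedBall y (r / 2)) (x₀ : X) (R : ℝ) :
    ∀ k : ℕ, ∃ t : Finset X, t.card ≤ N ^ k ∧
      closedBall x₀ R ⊆ ⋃ y ∈ t, closedBall y (R / 2 ^ k) := by
  intro k
  induction k with
  | zero => exact ⟨{x₀}, by simp, by simp⟩
  | succ k ih =>
    classical
    obtain ⟨t, hcard, hcov⟩ := ih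
    choose u hu hucov using fun y : X => hN y (R / 2 ^ k)
    refine ⟨t.biUnion u, ?_, ?_⟩
    · calc (t.biUnion u).card ≤ ∑ y ∈ t, (u y).card := Finset.card_biUnion_le
        _ ≤ ∑ _y ∈ t, N := Finset.sum_le_sum fun y _ => hu y
        _ = t.card * N := by simp [mul_comm]
        _ ≤ N ^ k * N := Nat.mul_le_mul_right _ hcard
        _ = N ^ (k + 1) := (pow_succ N k).symm
    · intro z hz
      obtain ⟨y, hyt, hzy⟩ := mem_iUnion₂.1 (hcov hz)
      obtain ⟨w, hwy, hzw⟩ := mem_iUnion₂.1 (hucov y hzy)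
      refine mem_iUnion₂.2 ⟨w, Finset.mem_biUnion.2 ⟨y, hyt, hwy⟩, ?_⟩
      have : R / 2 ^ k / 2 = R / 2 ^ (k + 1) := by ring
      rwa [this] at hzw

lemma sep_card {X : Type*} [MetricSpace X] {S : Set X} {ε r : ℝ} {t : Finset X}
    (hsep : S.Pairwise fun a b => ε < dist a b)
    (hcov : ∀ z ∈ S, ∃ y ∈ t, z ∈ closedBall y r) (h2r : 2 * r ≤ ε) :
    S.Finite ∧ S.ncard ≤ t.card := by
  classical
  choose! c hct hcd using hcov
  have hinj : S.InjOn c := by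
    intro a ha b hb hab
    by_contra hne
    have h1 := hcd a ha
    have h2 := hcd b hb
    rw [mem_closedBall] at h1 h2
    have := hsep ha hb hne
    rw [hab] at h1
    have : dist a b ≤ 2 * r := by
      calc dist a b ≤ dist a (c b) + dist (c b) b := dist_triangle _ _ _
        _ ≤ r + r := add_le_add h1 (by rw [dist_comm]; exact h2)
        _ = 2 * r := by ring
    linarith [hsep ha hb hne]
  have himg : c '' S ⊆ ↑t := by
    rintro _ ⟨a, ha, rfl⟩; exact hct a ha
  have hfin : S.Finite := Set.Finite.of_finite_image (t.finite_toSet.subset himg) hinj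
  refine ⟨hfin, ?_⟩
  calc S.ncard = (c '' S).ncard := (Set.ncard_image_of_injOn hinj).symm
    _ ≤ (↑t : Set X).ncard := Set.ncard_le_ncard himg t.finite_toSet
    _ = t.card := Set.ncard_coe_finset t

lemma measure_cb_le {X : Type*} [MetricSpace X] [MeasurableSpace X] [OpensMeasurableSpace X]
    (μ : Measure X) {s r : ℝ} (hs : 0 ≤ s) (hr : 0 < r) (x : X) :
    μ (closedBall x r) ≤ ENNReal.ofReal r ^ s * potential μ s x := by
  have h0 : ENNReal.ofReal r ≠ 0 := by simp [hr]
  have htop : ENNReal.ofReal r ≠ ⊤ := ENNReal.ofReal_ne_top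
  have key : ENNReal.ofReal r ^ (-s) * μ (closedBall x r) ≤ potential μ s x := by
    calc ENNReal.ofReal r ^ (-s) * μ (closedBall x r)
        = ∫⁻ _ in closedBall x r, ENNReal.ofReal r ^ (-s) ∂μ :=
          (setLIntegral_const _ _).symm
      _ ≤ ∫⁻ y in closedBall x r, edist x y ^ (-s) ∂μ := by
          refine setLIntegral_mono' measurableSet_closedBall fun y hy => ?_
          have hd : edist x y ≤ ENNReal.ofReal r := by
            rw [edist_comm]
            exact (edist_le_ofReal hr.le).2 hy
          rw [ENNReal.rpow_neg, ENNReal.rpow_neg]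
          exact ENNReal.inv_le_inv.2 (ENNReal.rpow_le_rpow hd hs)
      _ ≤ potential μ s x := setLIntegral_le_lintegral _ _
  have := mul_le_mul_right key (ENNReal.ofReal r ^ s)
  rwa [← mul_assoc, ← ENNReal.rpow_add _ _ h0 htop, add_neg_cancel, ENNReal.rpow_zero,
    one_mul] at this

/-- A metric space is doubling if there is `N` such that every closed ball can be
covered by `N` closed balls of half the radius. -/
def DoublingSpace (X : Type*) [MetricSpace X] : Prop :=
  ∃ N : ℕ, ∀ (x : X) (r : ℝ), ∃ t : Finset X, t.card ≤ N ∧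
    closedBall x r ⊆ ⋃ y ∈ t, closedBall y (r / 2)

set_option maxHeartbeats 2000000 in
/-- Upper bound for the correlation dimension via a general filtration, together with
the key integral estimate `∫ μ(B(x, 2γ_n)) dμ(x) ≥ ∑_{Q ∈ Q_n} μ(Q)²`. -/
theorem corrDim_general_filtration_upper {X : Type*} [MetricSpace X] [CompactSpace X]
    [MeasurableSpace X] [BorelSpace X] (hX : DoublingSpace X)
    (δ γ : ℕ → ℝ) (Qn : ℕ → Set (Set X))
    (hδpos : ∀ n, 0 < δ n) (hγpos : ∀ n, 0 < γ n)
    (hδanti : Antitone δ) (hγanti : Antitone γ)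
    (hF1 : ∀ n, δ n ≤ γ n)
    (hF2 : Tendsto γ atTop (𝓝 0))
    (hF3 : Tendsto (fun n => Real.log (δ n) / Real.log (δ (n + 1))) atTop (𝓝 1))
    (hF4 : Tendsto (fun n => Real.log (γ n) / Real.log (δ n)) atTop (𝓝 1))
    (hdisj : ∀ n, (Qn n).PairwiseDisjoint id)
    (hborel : ∀ n, ∀ Q ∈ Qn n, MeasurableSet Q)
    (hball_in : ∀ n, ∀ Q ∈ Qn n, ∃ x : X, closedBall x (δ n) ⊆ Q)
    (hball_out : ∀ n, ∀ Q ∈ Qn n, ∃ x : X, Q ⊆ closedBall x (γ n))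
    (μ : Measure X) [IsFiniteMeasure μ] [μ.Regular]
    (hsupp : μ (⋂ n, ⋃₀ Qn n)ᶜ = 0) :
    (∀ n, (∑' Q : Qn n, (μ (Q : Set X)) ^ 2) ≤
        ∫⁻ x, μ (closedBall x (2 * γ n)) ∂μ) ∧
    corrDim μ ≤
      liminf (fun n =>
        Real.log (∑' Q : Qn n, (μ (Q : Set X)) ^ 2).toReal / Real.log (δ n)) atTop := by
  classical
  -- Part A
  have hA : ∀ n, (∑' Q : Qn n, (μ (Q : Set X)) ^ 2) ≤
      ∫⁻ x, μ (closedBall x (2 * γ n)) ∂μ := by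
    intro n
    rw [ENNReal.tsum_eq_iSup_sum]
    refine iSup_le fun t => ?_
    have step : ∀ Q : ↥(Qn n), μ (Q : Set X) ^ 2 ≤
        ∫⁻ x in (Q : Set X), μ (closedBall x (2 * γ n)) ∂μ := by
      rintro ⟨Q, hQ⟩
      obtain ⟨cq, hcq⟩ := hball_out n Q hQ
      have hsub : ∀ x ∈ Q, (fun _ => μ Q) x ≤ μ (closedBall x (2 * γ n)) := by
        intro x hx
        refine measure_mono fun y hy => ?_
        have h1 := mem_closedBall.1 (hcq hx)
        have h2 := mem_closedBall.1 (hcq hy)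
        rw [mem_closedBall]
        calc dist y x ≤ dist y cq + dist cq x := dist_triangle _ _ _
          _ ≤ γ n + γ n := add_le_add h2 (by rw [dist_comm]; exact h1)
          _ = 2 * γ n := by ring
      calc μ Q ^ 2 = μ Q * μ Q := sq (μ Q)
        _ = ∫⁻ _ in Q, μ Q ∂μ := (setLIntegral_const Q (μ Q)).symm
        _ ≤ ∫⁻ x in Q, μ (closedBall x (2 * γ n)) ∂μ :=
            setLIntegral_mono' (hborel n Q hQ) hsub
    have hdisj' : (↑t : Set ↥(Qn n)).PairwiseDisjoint fun Q : ↥(Qn n) => (Q : Set X) := by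
      intro a _ b _ hne
      exact hdisj n a.2 b.2 fun h => hne (Subtype.ext h)
    calc ∑ Q ∈ t, μ (Q : Set X) ^ 2
        ≤ ∑ Q ∈ t, ∫⁻ x in (Q : Set X), μ (closedBall x (2 * γ n)) ∂μ :=
          Finset.sum_le_sum fun Q _ => step Q
      _ = ∫⁻ x in ⋃ Q ∈ t, (Q : Set X), μ (closedBall x (2 * γ n)) ∂μ :=
          (lintegral_biUnion_finset hdisj' (fun Q _ => hborel n Q Q.2) _).symm
      _ ≤ ∫⁻ x, μ (closedBall x (2 * γ n)) ∂μ := setLIntegral_le_lintegral _ _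
  refine ⟨hA, ?_⟩
  -- Part B
  by_cases hμ : μ = 0
  · subst hμ
    have h1 : corrDim (0 : Measure X) = 0 := by
      have : {s : ℝ | energy (0 : Measure X) s < ⊤} = univ := by
        ext s; simp [energy]
      rw [corrDim, this, Real.sSup_univ]
    have h2 : ∀ n, (∑' Q : Qn n, ((0 : Measure X) (Q : Set X)) ^ 2) = 0 := by
      intro n; simp
    rw [h1]
    have : (fun n => Real.log (∑' Q : Qn n,
        ((0 : Measure X) (Q : Set X)) ^ 2).toReal / Real.log (δ n)) = fun _ => (0:ℝ) := by
      funext n; rw [h2 n]; simp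
    rw [this, liminf_const]
  · have hm0 : μ univ ≠ 0 := by
      simpa [Measure.measure_univ_ne_zero] using hμ
    have hmtop : μ univ ≠ ⊤ := measure_ne_top μ univ
    have hXne : Nonempty X := by
      by_contra h
      rw [not_nonempty_iff] at h
      exact hm0 (by simp [Set.univ_eq_empty_iff.2 h])
    obtain ⟨N, hN⟩ := hX
    have hN1 : 1 ≤ N := by
      by_contra h
      push_neg at h
      interval_cases N
      obtain ⟨t, hcard, hcov⟩ := hN (Classical.arbitrary X) 0
      rw [Nat.le_zero, Finset.card_eq_zero] at hcard
      subst hcard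
      simpa using hcov (mem_closedBall_self le_rfl)
    set x₀ : X := Classical.arbitrary X with hx₀
    obtain ⟨R', hR'⟩ := (isCompact_univ (X := X)).isBounded.subset_closedBall x₀
    set R : ℝ := max R' 1 with hRdef
    have hR1 : 1 ≤ R := le_max_right _ _
    have hR0 : 0 < R := lt_of_lt_of_le one_pos hR1
    have hRuniv : (univ : Set X) ⊆ closedBall x₀ R :=
      hR'.trans (closedBall_subset_closedBall (le_max_left _ _))
    -- number of pieces
    set k : ℕ → ℕ := fun n => ⌈Real.logb 2 (2 * R / δ n)⌉₊ with hkdef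
    have hk2 : ∀ n, 2 * R / δ n ≤ 2 ^ (k n) := by
      intro n
      rcases le_or_gt (2 * R / δ n) 1 with h | h
      · exact h.trans (one_le_pow₀ one_le_two)
      · have h0 : (0:ℝ) < 2 * R / δ n := lt_trans one_pos h
        calc 2 * R / δ n = (2:ℝ) ^ Real.logb 2 (2 * R / δ n) :=
              (Real.rpow_logb two_pos (by norm_num) h0).symm
          _ ≤ (2:ℝ) ^ ((k n : ℝ)) :=
              Real.rpow_le_rpow_of_exponent_le one_le_two (Nat.le_ceil _)
          _ = 2 ^ (k n) := by rw [Real.rpow_natCast]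
    have hQcard : ∀ n, (Qn n).Finite ∧ (Qn n).ncard ≤ N ^ (k n) := by
      intro n
      obtain ⟨t, htcard, htcov⟩ := cover_iter N hN x₀ R (k n)
      choose! c hc using hball_in n
      have hcinj : (Qn n).InjOn c := by
        intro Q hQ Q' hQ' hcc
        by_contra hne
        have hd := hdisj n hQ hQ' hne
        have h1 : c Q ∈ Q := hc Q hQ (mem_closedBall_self (hδpos n).le)
        have h2 : c Q ∈ Q' := by
          rw [hcc]; exact hc Q' hQ' (mem_closedBall_self (hδpos n).le)
        exact (Set.disjoint_left.1 hd h1) h2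
      have hsep : (c '' Qn n).Pairwise fun a b => δ n < dist a b := by
        rintro _ ⟨Q, hQ, rfl⟩ _ ⟨Q', hQ', rfl⟩ hne
        have hQne : Q ≠ Q' := fun h => hne (by rw [h])
        by_contra hle
        push_neg at hle
        have h1 : c Q' ∈ Q := hc Q hQ (by rw [mem_closedBall, dist_comm]; exact hle)
        have h2 : c Q' ∈ Q' := hc Q' hQ' (mem_closedBall_self (hδpos n).le)
        exact (Set.disjoint_left.1 (hdisj n hQ hQ' hQne) h1) h2
      have hcov' : ∀ z ∈ c '' Qn n, ∃ y ∈ t, z ∈ closedBall y (R / 2 ^ (k n)) := by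
        intro z _
        obtain ⟨y, hyt, hzy⟩ := mem_iUnion₂.1 (htcov (hRuniv (mem_univ z)))
        exact ⟨y, hyt, hzy⟩
      have h2r : 2 * (R / 2 ^ (k n)) ≤ δ n := by
        have hk2n := hk2 n
        rw [div_le_iff₀ (hδpos n)] at hk2n
        have hpow : (0:ℝ) < 2 ^ (k n) := by positivity
        rw [← mul_div_assoc, div_le_iff₀ hpow]
        linarith
      obtain ⟨hfin, hcard⟩ := sep_card hsep hcov' h2r
      refine ⟨Set.Finite.of_finite_image hfin hcinj, ?_⟩
      calc (Qn n).ncard = (c '' Qn n).ncard := (Set.ncard_image_of_injOn hcinj).symm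
        _ ≤ t.card := hcard
        _ ≤ N ^ (k n) := htcard
    -- finite-sum form of Sₙ and lower bounds
    set F : ℕ → Finset (Set X) := fun n => (hQcard n).1.toFinset with hFdef
    have hSn_eq : ∀ n, (∑' Q : Qn n, (μ (Q : Set X)) ^ 2) = ∑ Q ∈ F n, μ Q ^ 2 := by
      intro n
      have hco : Qn n = ↑(F n) := ((hQcard n).1.coe_toFinset).symm
      rw [hco]
      exact Finset.tsum_subtype' (F n) fun Q => μ Q ^ 2
    have hm_le : ∀ n, μ univ ≤ μ (⋃₀ Qn n) := by
      intro n
      calc μ univ = μ ((⋂ i, ⋃₀ Qn i) ∪ (⋂ i, ⋃₀ Qn i)ᶜ) := by rw [union_compl_self]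
        _ ≤ μ (⋂ i, ⋃₀ Qn i) + μ (⋂ i, ⋃₀ Qn i)ᶜ := measure_union_le _ _
        _ = μ (⋂ i, ⋃₀ Qn i) := by rw [hsupp, add_zero]
        _ ≤ μ (⋃₀ Qn n) := measure_mono (iInter_subset _ n)
    have hsum_ge : ∀ n, μ univ ≤ ∑ Q ∈ F n, μ Q := by
      intro n
      refine (hm_le n).trans ?_
      have hU : ⋃₀ Qn n = ⋃ Q ∈ F n, Q := by
        rw [show Qn n = ↑(F n) from ((hQcard n).1.coe_toFinset).symm,
          Set.sUnion_eq_biUnion]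
        simp
      rw [hU]
      exact measure_biUnion_finset_le _ _
    have hFne : ∀ n, (F n).Nonempty := by
      intro n
      rcases Finset.eq_empty_or_nonempty (F n) with h | h
      · exfalso
        have h2 := hsum_ge n
        rw [h, Finset.sum_empty, le_zero_iff] at h2
        exact hm0 h2
      · exact h
    have hcard_eq : ∀ n, (Qn n).ncard = (F n).card := fun n =>
      Set.ncard_eq_toFinset_card _ (hQcard n).1
    have hq1 : ∀ n, 1 ≤ (Qn n).ncard := by
      intro n
      rw [hcard_eq n]
      exact Finset.card_pos.2 (hFne n)
    have hSn_ge : ∀ n, (μ univ / (Qn n).ncard) ^ 2 ≤ ∑' Q : Qn n, (μ (Q : Set X)) ^ 2 := by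
      intro n
      obtain ⟨Qm, hQm, hQmax⟩ := Finset.exists_max_image (F n) (fun Q => μ Q) (hFne n)
      have h1 : μ univ ≤ (F n).card • μ Qm :=
        (hsum_ge n).trans (Finset.sum_le_card_nsmul _ _ _ fun Q hQ => hQmax Q hQ)
      have h2 : μ univ / (Qn n).ncard ≤ μ Qm := by
        refine ENNReal.div_le_of_le_mul ?_
        rw [hcard_eq n, mul_comm]
        rwa [nsmul_eq_mul] at h1
      calc (μ univ / (Qn n).ncard) ^ 2 ≤ μ Qm ^ 2 := pow_le_pow_left' h2 2
        _ ≤ ∑ Q ∈ F n, μ Q ^ 2 := Finset.single_le_sum (f := fun Q => μ Q ^ 2) (fun Q _ => zero_le) hQm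
        _ = ∑' Q : Qn n, (μ (Q : Set X)) ^ 2 := (hSn_eq n).symm
    have hSn_top : ∀ n, (∑' Q : Qn n, (μ (Q : Set X)) ^ 2) ≠ ⊤ := by
      intro n
      have hb : ∫⁻ x, μ (closedBall x (2 * γ n)) ∂μ ≤ μ univ * μ univ := by
        calc ∫⁻ x, μ (closedBall x (2 * γ n)) ∂μ ≤ ∫⁻ _, μ univ ∂μ :=
              lintegral_mono fun x => measure_mono (subset_univ _)
          _ = μ univ * μ univ := by rw [lintegral_const, mul_comm]
      exact (((hA n).trans hb).trans_lt
        (ENNReal.mul_lt_top (measure_lt_top μ _) (measure_lt_top μ _))).ne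
    have hSpos : ∀ n, 0 < (∑' Q : Qn n, (μ (Q : Set X)) ^ 2) := by
      intro n
      refine lt_of_lt_of_le ?_ (hSn_ge n)
      have hne : μ univ / (Qn n).ncard ≠ 0 :=
        ENNReal.div_ne_zero.2 ⟨hm0, ENNReal.natCast_ne_top _⟩
      exact pos_iff_ne_zero.2 (pow_ne_zero 2 hne)
    -- limits of log δ
    set L : ℕ → ℝ := fun n => Real.log (δ n) with hLdef
    have hδ0 : Tendsto δ atTop (𝓝 0) := squeeze_zero (fun n => (hδpos n).le) hF1 hF2
    have hLbot : Tendsto L atTop atBot := by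
      have h1 : Tendsto δ atTop (𝓝[>] 0) :=
        tendsto_nhdsWithin_of_tendsto_nhds_of_eventually_within _ hδ0
          (Eventually.of_forall fun n => hδpos n)
      exact Real.tendsto_log_nhdsGT_zero.comp h1
    have hLinv : Tendsto (fun n => (L n)⁻¹) atTop (𝓝 0) := by
      have h1 : Tendsto (fun n => -L n) atTop atTop := tendsto_neg_atBot_atTop.comp hLbot
      have h2 : Tendsto (fun n => (-L n)⁻¹) atTop (𝓝 0) := tendsto_inv_atTop_zero.comp h1
      have h3 := h2.neg
      simp only [inv_neg, neg_neg, neg_zero] at h3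
      exact h3
    -- constants
    set C₂ : ℝ := 2 * Real.log N / Real.log 2 with hC2def
    set C₁ : ℝ := 2 * Real.log (μ univ).toReal - 2 * Real.log N - C₂ * Real.log (2 * R)
      with hC1def
    have hlog2 : (0:ℝ) < Real.log 2 := Real.log_pos one_lt_two
    have hlogN : (0:ℝ) ≤ Real.log N := Real.log_nonneg (by exact_mod_cast hN1)
    have hC2nn : 0 ≤ C₂ := by positivity
    have hmtR : 0 < (μ univ).toReal := ENNReal.toReal_pos hm0 hmtop
    -- eventual lower bound for log Sₙ
    have hkey : ∀ᶠ n in atTop,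
        C₁ + C₂ * L n ≤ Real.log (∑' Q : Qn n, (μ (Q : Set X)) ^ 2).toReal := by
      filter_upwards [hδ0.eventually_lt_const (by positivity : (0:ℝ) < 2 * R)] with n hn
      set q : ℕ := (Qn n).ncard with hqdef
      have hq1n : (1:ℝ) ≤ q := by exact_mod_cast hq1 n
      have hqpos : (0:ℝ) < q := lt_of_lt_of_le one_pos hq1n
      -- step 1 : 2 * log(m/q) ≤ log Sₙ
      have hle := ENNReal.toReal_mono (hSn_top n) (hSn_ge n)
      have heq : (((μ univ) / (q:ℕ)) ^ 2 : ℝ≥0∞).toReal = ((μ univ).toReal / q) ^ 2 := by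
        rw [ENNReal.toReal_pow, ENNReal.toReal_div, ENNReal.toReal_natCast]
      rw [heq] at hle
      have hpos : (0:ℝ) < (μ univ).toReal / q := by positivity
      have hlow1 : 2 * (Real.log (μ univ).toReal - Real.log q) ≤
          Real.log (∑' Q : Qn n, (μ (Q : Set X)) ^ 2).toReal := by
        have := Real.log_le_log (by positivity) hle
        rwa [Real.log_pow, Real.log_div hmtR.ne' hqpos.ne', Nat.cast_ofNat] at this
      -- step 2 : log q ≤ k n * log N
      have hqN : (q:ℝ) ≤ (N:ℝ) ^ (k n) := by exact_mod_cast (hQcard n).2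
      have hlogq : Real.log q ≤ (k n : ℝ) * Real.log N := by
        have := Real.log_le_log hqpos hqN
        rwa [Real.log_pow] at this
      -- step 3 : k n ≤ (log (2R) - L n)/log 2 + 1
      have hx1 : (1:ℝ) ≤ 2 * R / δ n := (one_le_div (hδpos n)).2 hn.le
      have hlb0 : 0 ≤ Real.logb 2 (2 * R / δ n) := Real.logb_nonneg one_lt_two hx1
      have hkb : (k n : ℝ) ≤ (Real.log (2 * R) - L n) / Real.log 2 + 1 := by
        have h1 : (k n : ℝ) ≤ Real.logb 2 (2 * R / δ n) + 1 :=
          (Nat.ceil_lt_add_one hlb0).le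
        have h2 : Real.logb 2 (2 * R / δ n) = (Real.log (2 * R) - L n) / Real.log 2 := by
          rw [Real.logb, Real.log_div (by positivity) (hδpos n).ne']
        linarith
      -- combine
      have hcomb : Real.log q ≤ ((Real.log (2 * R) - L n) / Real.log 2 + 1) * Real.log N :=
        hlogq.trans (mul_le_mul_of_nonneg_right hkb hlogN)
      have halg : 2 * (Real.log (μ univ).toReal -
          ((Real.log (2 * R) - L n) / Real.log 2 + 1) * Real.log N) = C₁ + C₂ * L n := by
        rw [hC1def, hC2def]
        field_simp
        ring
      nlinarith [hlow1, hcomb]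
    -- boundedness of the quotient sequence
    have hub : ∀ᶠ n in atTop,
        Real.log (∑' Q : Qn n, (μ (Q : Set X)) ^ 2).toReal / Real.log (δ n) ≤ C₂ + 1 := by
      filter_upwards [hkey, hLbot.eventually (eventually_le_atBot (-(max 1 |C₁|)))]
        with n hk hLle
      have hLneg : L n < 0 := lt_of_le_of_lt hLle
        (neg_lt_zero.2 (lt_of_lt_of_le one_pos (le_max_left _ _)))
      have hLne : L n ≠ 0 := hLneg.ne
      have step1 : Real.log (∑' Q : Qn n, (μ (Q : Set X)) ^ 2).toReal * (L n)⁻¹ ≤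
          (C₁ + C₂ * L n) * (L n)⁻¹ :=
        mul_le_mul_of_nonpos_right hk (inv_nonpos.2 hLneg.le)
      have step2 : (C₁ + C₂ * L n) * (L n)⁻¹ = C₁ * (L n)⁻¹ + C₂ := by
        field_simp
      have step3 : C₁ * (L n)⁻¹ ≤ 1 := by
        have h1 : |C₁| ≤ -L n := le_trans (le_max_right 1 _) (by linarith)
        have h2 : |L n| = -L n := abs_of_neg hLneg
        calc C₁ * (L n)⁻¹ ≤ |C₁ * (L n)⁻¹| := le_abs_self _
          _ = |C₁| / |L n| := by rw [abs_mul, abs_inv, div_eq_mul_inv]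
          _ ≤ 1 := by
              rw [div_le_one (by rw [h2]; linarith)]
              rw [h2]; exact h1
      calc Real.log (∑' Q : Qn n, (μ (Q : Set X)) ^ 2).toReal / Real.log (δ n)
          = Real.log (∑' Q : Qn n, (μ (Q : Set X)) ^ 2).toReal * (L n)⁻¹ := by
            rw [div_eq_mul_inv]
        _ ≤ C₁ * (L n)⁻¹ + C₂ := by rw [← step2]; exact step1
        _ ≤ C₂ + 1 := by linarith
    have hcob : IsCoboundedUnder (· ≥ ·) atTop
        (fun n => Real.log (∑' Q : Qn n, (μ (Q : Set X)) ^ 2).toReal / Real.log (δ n)) :=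
      IsBoundedUnder.isCoboundedUnder_ge ⟨C₂ + 1, by simpa [eventually_map] using hub⟩
    -- every finite-energy exponent is ≤ the liminf
    have hkeyS : ∀ s : ℝ, 0 ≤ s → energy μ s ≠ ⊤ →
        s ≤ liminf (fun n => Real.log (∑' Q : Qn n, (μ (Q : Set X)) ^ 2).toReal /
          Real.log (δ n)) atTop := by
      intro s hs hI
      set I := energy μ s with hIdef
      have hup : ∀ n, (∑' Q : Qn n, (μ (Q : Set X)) ^ 2) ≤
          ENNReal.ofReal (2 * γ n) ^ s * I := by
        intro n
        refine (hA n).trans ?_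
        have hpt : ∀ x, μ (closedBall x (2 * γ n)) ≤
            ENNReal.ofReal (2 * γ n) ^ s * potential μ s x := fun x =>
          measure_cb_le μ hs (mul_pos two_pos (hγpos n)) x
        calc ∫⁻ x, μ (closedBall x (2 * γ n)) ∂μ
            ≤ ∫⁻ x, ENNReal.ofReal (2 * γ n) ^ s * potential μ s x ∂μ := lintegral_mono hpt
          _ = ENNReal.ofReal (2 * γ n) ^ s * ∫⁻ x, potential μ s x ∂μ :=
            lintegral_const_mul' _ _ (ENNReal.rpow_ne_top_of_nonneg hs ENNReal.ofReal_ne_top)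
          _ = ENNReal.ofReal (2 * γ n) ^ s * I := rfl
      have hI0 : I ≠ 0 := by
        intro h0
        have h1 := hup 0
        rw [h0, mul_zero, le_zero_iff] at h1
        exact (hSpos 0).ne' h1
      have hItR : 0 < I.toReal := ENNReal.toReal_pos hI0 hI
      set g : ℕ → ℝ := fun n => s * Real.log 2 * (L n)⁻¹ +
        s * (Real.log (γ n) * (L n)⁻¹) + Real.log I.toReal * (L n)⁻¹ with hgdef
      have hgt : Tendsto g atTop (𝓝 s) := by
        have t1 : Tendsto (fun n => s * Real.log 2 * (L n)⁻¹) atTop (𝓝 0) := by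
          simpa using hLinv.const_mul (s * Real.log 2)
        have hF4' : Tendsto (fun n => Real.log (γ n) * (L n)⁻¹) atTop (𝓝 1) := by
          simpa [div_eq_mul_inv] using hF4
        have t2 : Tendsto (fun n => s * (Real.log (γ n) * (L n)⁻¹)) atTop (𝓝 (s * 1)) :=
          hF4'.const_mul s
        have t3 : Tendsto (fun n => Real.log I.toReal * (L n)⁻¹) atTop (𝓝 0) := by
          simpa using hLinv.const_mul (Real.log I.toReal)
        have h4 := (t1.add t2).add t3
        simpa using h4
      have hgf : ∀ᶠ n in atTop, g n ≤
          Real.log (∑' Q : Qn n, (μ (Q : Set X)) ^ 2).toReal / Real.log (δ n) := by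
        filter_upwards [hLbot.eventually (eventually_lt_atBot 0)] with n hLn
        have hSpos' : 0 < (∑' Q : Qn n, (μ (Q : Set X)) ^ 2).toReal :=
          ENNReal.toReal_pos (hSpos n).ne' (hSn_top n)
        have h2γ : (0:ℝ) < 2 * γ n := mul_pos two_pos (hγpos n)
        have hlogup : Real.log (∑' Q : Qn n, (μ (Q : Set X)) ^ 2).toReal ≤
            s * Real.log 2 + s * Real.log (γ n) + Real.log I.toReal := by
          have h1 := ENNReal.toReal_mono
            (ENNReal.mul_ne_top (ENNReal.rpow_ne_top_of_nonneg hs ENNReal.ofReal_ne_top) hI)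
            (hup n)
          rw [ENNReal.toReal_mul, ← ENNReal.toReal_rpow, ENNReal.toReal_ofReal h2γ.le] at h1
          have h2 := Real.log_le_log hSpos' h1
          rw [Real.log_mul (by positivity) hItR.ne', Real.log_rpow h2γ,
            Real.log_mul two_ne_zero (hγpos n).ne'] at h2
          linarith
        calc g n = (s * Real.log 2 + s * Real.log (γ n) + Real.log I.toReal) * (L n)⁻¹ := by
              rw [hgdef]; ring
          _ ≤ Real.log (∑' Q : Qn n, (μ (Q : Set X)) ^ 2).toReal * (L n)⁻¹ :=
              mul_le_mul_of_nonpos_right hlogup (inv_nonpos.2 hLn.le)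
          _ = _ := (div_eq_mul_inv _ _).symm
      refine le_of_forall_lt fun a ha => ?_
      obtain ⟨a', ha1, ha2⟩ := exists_between ha
      have hev : ∀ᶠ n in atTop, a' ≤
          Real.log (∑' Q : Qn n, (μ (Q : Set X)) ^ 2).toReal / Real.log (δ n) := by
        filter_upwards [hgf, hgt.eventually_const_lt ha2] with n h1 h2
        exact h2.le.trans h1
      exact lt_of_lt_of_le ha1 (le_liminf_of_le hcob hev)
    -- conclusion
    have h0mem : energy μ 0 < ⊤ := by
      have he : energy μ 0 = μ univ * μ univ := by
        simp [energy, neg_zero, ENNReal.rpow_zero, lintegral_const, lintegral_one, mul_comm]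
      rw [he]
      exact ENNReal.mul_lt_top (measure_lt_top μ _) (measure_lt_top μ _)
    refine csSup_le ⟨0, h0mem⟩ fun s hs => ?_
    rcases le_or_gt s 0 with h | h
    · exact h.trans (hkeyS 0 le_rfl h0mem.ne)
    · exact hkeyS s h.le hs.ne
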